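/- For the x-part of the Lax pair Ψ_x = (iσλ² + Qλ)Ψ with plane wave potential q = c·e^{i(ax+bt)}, q(-x,-t) = c·e^{-i(ax+bt)}, b = a² - ac², the vector Ψ₁ with components φ = e^{tR(-c²+2λ²+a)/2 + xR/2 + i(ax+bt)/2} and ψ = ((ia - 2iλ² + R)/(2cλ))·e^{tR(-c²+2λ²+a)/2 + xR/2 - i(ax+bt)/2}, where R = √(-4c²λ² - 4λ⁴ + 4aλ² - a²), satisfies Ψ_x = UΨ. -/

import Mathlib

open Complex

lemma dexp (p q : ℂ) (x : ℝ) :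
    HasDerivAt (fun x' : ℝ => Complex.exp (p * x' + q)) (p * Complex.exp (p * x + q)) x := by
  have h1 : HasDerivAt (fun z : ℂ => Complex.exp (p * z + q))
      (Complex.exp (p * (x : ℂ) + q) * (p * 1)) (x : ℂ) :=
    HasDerivAt.comp _ (Complex.hasDerivAt_exp _) (((hasDerivAt_id _).const_mul p).add_const q)
  simpa [mul_comm] using h1.comp_ofReal

theorem explicit_eigenfunction_x_part (a c : ℝ) (hc : c ≠ 0) (lam : ℂ) (hlam : lam ≠ 0)
    (b : ℝ) (hb : b = a ^ 2 - a * c ^ 2) (R : ℂ)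
    (hR : R ^ 2 = -4 * (c : ℂ) ^ 2 * lam ^ 2 - 4 * lam ^ 4 + 4 * (a : ℂ) * lam ^ 2 - (a : ℂ) ^ 2)
    (φ ψ : ℝ → ℝ → ℂ)
    (hφ : ∀ x t : ℝ, φ x t =
      Complex.exp ((t : ℂ) * R * (-(c : ℂ) ^ 2 + 2 * lam ^ 2 + (a : ℂ)) / 2
        + (x : ℂ) * R / 2 + Complex.I * ((a : ℂ) * x + (b : ℂ) * t) / 2))
    (hψ : ∀ x t : ℝ, ψ x t =
      (Complex.I * (a : ℂ) - 2 * Complex.I * lam ^ 2 + R) / (2 * (c : ℂ) * lam) *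
      Complex.exp ((t : ℂ) * R * (-(c : ℂ) ^ 2 + 2 * lam ^ 2 + (a : ℂ)) / 2
        + (x : ℂ) * R / 2 - Complex.I * ((a : ℂ) * x + (b : ℂ) * t) / 2)) :
    ∀ x t : ℝ,
      deriv (fun x' : ℝ => φ x' t) x
        = Complex.I * lam ^ 2 * φ x t
          + lam * ((c : ℂ) * Complex.exp (Complex.I * ((a : ℂ) * x + (b : ℂ) * t))) * ψ x t ∧
      deriv (fun x' : ℝ => ψ x' t) x
        = -(Complex.I * lam ^ 2) * ψ x t
          + lam * (-((c : ℂ) * Complex.exp (-(Complex.I * ((a : ℂ) * x + (b : ℂ) * t))))) * φ x t := by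
  intro x t
  have hc' : (c : ℂ) ≠ 0 := by exact_mod_cast hc
  set K : ℂ := (Complex.I * a - 2 * Complex.I * lam ^ 2 + R) / (2 * (c : ℂ) * lam) with hK
  set q1 : ℂ := (t : ℂ) * R * (-(c : ℂ) ^ 2 + 2 * lam ^ 2 + (a : ℂ)) / 2
      + Complex.I * (b : ℂ) * t / 2 with hq1
  set q2 : ℂ := (t : ℂ) * R * (-(c : ℂ) ^ 2 + 2 * lam ^ 2 + (a : ℂ)) / 2
      - Complex.I * (b : ℂ) * t / 2 with hq2
  set p1 : ℂ := R / 2 + Complex.I * a / 2 with hp1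
  set p2 : ℂ := R / 2 - Complex.I * a / 2 with hp2
  have hφ' : ∀ x' : ℝ, φ x' t = Complex.exp (p1 * x' + q1) := by
    intro x'; rw [hφ]; congr 1; rw [hp1, hq1]; push_cast; ring
  have hψ' : ∀ x' : ℝ, ψ x' t = K * Complex.exp (p2 * x' + q2) := by
    intro x'; rw [hψ, hK]; congr 2; rw [hp2, hq2]; push_cast; ring
  have d1 : deriv (fun x' : ℝ => φ x' t) x = p1 * φ x t := by
    have : (fun x' : ℝ => φ x' t) = fun x' : ℝ => Complex.exp (p1 * x' + q1) :=
      funext fun x' => hφ' x'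
    rw [this, (dexp p1 q1 x).deriv, ← hφ' x]
  have d2 : deriv (fun x' : ℝ => ψ x' t) x = p2 * ψ x t := by
    have : (fun x' : ℝ => ψ x' t) = fun x' : ℝ => K * Complex.exp (p2 * x' + q2) :=
      funext fun x' => hψ' x'
    rw [this, (((dexp p2 q2 x)).const_mul K).deriv, ← mul_assoc, mul_comm K p2,
      mul_assoc, ← hψ' x]
  have hW : Complex.exp (Complex.I * ((a : ℂ) * x + (b : ℂ) * t)) *
      Complex.exp (-(Complex.I * ((a : ℂ) * x + (b : ℂ) * t))) = 1 := by
    rw [← Complex.exp_add]; simp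
  have hYφ : Complex.exp (-(Complex.I * ((a : ℂ) * x + (b : ℂ) * t))) * φ x t
      = Complex.exp (p2 * x + q2) := by
    rw [hφ' x, ← Complex.exp_add]; congr 1; rw [hp1, hq1, hp2, hq2]; ring
  have hYψ : Complex.exp (Complex.I * ((a : ℂ) * x + (b : ℂ) * t)) *
      Complex.exp (p2 * x + q2) = φ x t := by
    rw [hφ' x, ← Complex.exp_add]; congr 1; rw [hp1, hq1, hp2, hq2]; ring
  have hscal1 : p1 = Complex.I * lam ^ 2 + lam * (c : ℂ) * K := by
    rw [hp1, hK]; field_simp; ring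
  have hscal2 : p2 * K = -(Complex.I * lam ^ 2) * K - lam * (c : ℂ) := by
    rw [hp2, hK]; field_simp; linear_combination hR + (4 * (a : ℂ) * lam ^ 2 - (a : ℂ) ^ 2 - 4 * lam ^ 4) * Complex.I_sq
  constructor
  · rw [d1, ← hYψ, hψ' x]
    linear_combination (Complex.exp (Complex.I * ((a : ℂ) * x + (b : ℂ) * t)) *
      Complex.exp (p2 * (x : ℂ) + q2)) * hscal1
  · rw [d2]
    have hterm : lam * (-((c : ℂ) * Complex.exp (-(Complex.I * ((a : ℂ) * x + (b : ℂ) * t))))) * φ x t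
        = -(lam * (c : ℂ)) * Complex.exp (p2 * (x : ℂ) + q2) := by
      rw [← hYφ]; ring
    rw [hterm, hψ' x]
    linear_combination Complex.exp (p2 * (x : ℂ) + q2) * hscal2
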